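/- arXiv:1806.08124 — 3 statements merged into one kernel-verified Lean document; each statement's English description precedes it below -/
import Mathlib

section
/- Let μ, ȳ, ψ ∈ L²(Ω) with μ ≥ 0 a.e., ρ > 0, and set μ̄ := (μ + ρ(ȳ - ψ))₊. Then the positive part of the inner product satisfies (μ̄, ψ - ȳ)₊ ≤ (1/(2ρ))‖μ‖²_{L²(Ω)}, where (a)₊ := max(a, 0) for a real number a. -/
open MeasureTheory

/-- `(μ̄, ψ - ȳ)₊ ≤ (1/(2ρ))‖μ‖²_{L²}` for `μ̄ = (μ + ρ(ȳ - ψ))₊`. -/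
theorem stmt_2 {Ω : Type*} [MeasurableSpace Ω] (ν : Measure Ω)
    (μ ybar ψ : Ω → ℝ) (ρ : ℝ) (hρ : 0 < ρ)
    (hμ : ∀ᵐ x ∂ν, 0 ≤ μ x)
    (mubar : Ω → ℝ)
    (hmubar : ∀ x, mubar x = max (μ x + ρ * (ybar x - ψ x)) 0)
    (hint1 : Integrable (fun x => mubar x * (ψ x - ybar x)) ν)
    (hint2 : Integrable (fun x => (μ x) ^ 2) ν) :
    max (∫ x, mubar x * (ψ x - ybar x) ∂ν) 0 ≤
      (1 / (2 * ρ)) * ∫ x, (μ x) ^ 2 ∂ν := by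
  have hR : 0 ≤ (1 / (2 * ρ)) * ∫ x, (μ x) ^ 2 ∂ν := by
    apply mul_nonneg (by positivity)
    exact integral_nonneg fun x => sq_nonneg _
  apply max_le _ hR
  have hpt : ∀ x, mubar x * (ψ x - ybar x) ≤ (1 / (2 * ρ)) * (μ x) ^ 2 := by
    intro x
    rw [hmubar x]
    rcases le_or_gt (μ x + ρ * (ybar x - ψ x)) 0 with h | h
    · rw [max_eq_right h, zero_mul]; positivity
    · rw [max_eq_left h.le]
      rw [div_mul_eq_mul_div, le_div_iff₀ (by linarith)]
      nlinarith [sq_nonneg (μ x - (μ x + ρ * (ybar x - ψ x)))]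
  calc ∫ x, mubar x * (ψ x - ybar x) ∂ν
      ≤ ∫ x, (1 / (2 * ρ)) * (μ x) ^ 2 ∂ν :=
        integral_mono hint1 (hint2.const_mul _) hpt
    _ = (1 / (2 * ρ)) * ∫ x, (μ x) ^ 2 ∂ν := integral_const_mul _ _
end

section
/- Let a_ρ, b_ρ ≥ 0 satisfy the inequality β·a_ρ² + (1/(2ρ))·b_ρ² ≤ c·(b_ρ/ρ)^{2/(2+N)} + M/(2ρ) for all ρ ≥ 1, where β, c, M > 0 and N ∈ {2, 3} are fixed. Then (1/ρ)·b_ρ² is uniformly bounded in ρ, and consequently a_ρ² ≤ c'·ρ^{-1/(2+N)} + M/(2βρ) for some constant c' > 0, so a_ρ → 0 as ρ → ∞. -/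
open Filter Topology

set_option maxHeartbeats 1000000 in
/-- Abstract quantitative convergence argument: from the self-bounding inequality
`β a_ρ² + (1/(2ρ)) b_ρ² ≤ c (b_ρ/ρ)^{2/(2+N)} + M/(2ρ)` one obtains uniform
boundedness of `(1/ρ) b_ρ²`, the decay estimate for `a_ρ²`, and `a_ρ → 0`. -/
theorem stmt_10 (a b : ℝ → ℝ) (β c M : ℝ) (N : ℕ)
    (hβ : 0 < β) (hc : 0 < c) (hM : 0 < M) (hN : N = 2 ∨ N = 3)
    (ha : ∀ ρ ≥ (1 : ℝ), 0 ≤ a ρ) (hb : ∀ ρ ≥ (1 : ℝ), 0 ≤ b ρ)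
    (hineq : ∀ ρ ≥ (1 : ℝ),
      β * (a ρ) ^ 2 + (1 / (2 * ρ)) * (b ρ) ^ 2 ≤
        c * (b ρ / ρ) ^ ((2 : ℝ) / (2 + N)) + M / (2 * ρ)) :
    (∃ K : ℝ, ∀ ρ ≥ (1 : ℝ), (1 / ρ) * (b ρ) ^ 2 ≤ K) ∧
    (∃ c' > (0 : ℝ), ∀ ρ ≥ (1 : ℝ),
      (a ρ) ^ 2 ≤ c' * ρ ^ (-(1 : ℝ) / (2 + N)) + M / (2 * β * ρ)) ∧
    Tendsto a atTop (𝓝 0) := by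
  have h2N : (0:ℝ) < 2 + N := by positivity
  set A : ℝ := 2 / (2 + N) with hA
  have hA0 : 0 < A := by positivity
  have hA1 : A ≤ 1 := by
    rw [hA, div_le_one h2N]; linarith [Nat.cast_nonneg (α := ℝ) N]
  set K : ℝ := max 1 ((2 * c + M) ^ 2) with hK
  clear_value K
  have hK1 : (1:ℝ) ≤ K := hK ▸ le_max_left _ _
  have hK0 : (0:ℝ) < K := lt_of_lt_of_le one_pos hK1
  -- Step 1: uniform bound on t = b ρ ^ 2 / ρ
  have hbound : ∀ ρ ≥ (1:ℝ), b ρ ^ 2 / ρ ≤ K := by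
    intro ρ hρ
    have hρ0 : (0:ℝ) < ρ := lt_of_lt_of_le one_pos hρ
    have hbρ : 0 ≤ b ρ := hb ρ hρ
    set t : ℝ := b ρ ^ 2 / ρ with htdef
    clear_value t
    have ht0 : 0 ≤ t := htdef ▸ (by positivity : (0:ℝ) ≤ b ρ ^ 2 / ρ)
    by_cases h1 : t ≤ 1
    · exact le_trans h1 hK1
    push_neg at h1
    refine le_trans ?_ (hK ▸ le_max_right (1:ℝ) ((2*c+M)^2))
    have hst := Real.sq_sqrt ht0
    have hs1 : (1:ℝ) ≤ Real.sqrt t := by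
      rw [show (1:ℝ) = Real.sqrt 1 from (Real.sqrt_one).symm]
      exact Real.sqrt_le_sqrt h1.le
    -- (b ρ / ρ)^A ≤ sqrt t
    have hdiv : b ρ / ρ ≤ Real.sqrt t := by
      rw [← Real.sqrt_sq (by positivity : 0 ≤ b ρ / ρ)]
      apply Real.sqrt_le_sqrt
      rw [div_pow, htdef]
      apply div_le_div_of_nonneg_left (by positivity) hρ0
      nlinarith
    have hrpow : (b ρ / ρ) ^ A ≤ Real.sqrt t := by
      calc (b ρ / ρ) ^ A ≤ (Real.sqrt t) ^ A :=
            Real.rpow_le_rpow (by positivity) hdiv hA0.le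
        _ ≤ (Real.sqrt t) ^ (1:ℝ) :=
            Real.rpow_le_rpow_of_exponent_le hs1 hA1
        _ = Real.sqrt t := Real.rpow_one _
    have hkey := hineq ρ hρ
    have haρ := ha ρ hρ
    have hM2 : M / (2 * ρ) ≤ M / 2 := by
      apply div_le_div_of_nonneg_left hM.le (by norm_num)
      nlinarith
    have ht2 : t / 2 ≤ c * Real.sqrt t + M / 2 := by
      have h3 : (1 / (2 * ρ)) * b ρ ^ 2 = t / 2 := by
        rw [htdef]; field_simp
      nlinarith [mul_le_mul_of_nonneg_left hrpow hc.le]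
    have h6 : Real.sqrt t * Real.sqrt t ≤ (2 * c + M) * Real.sqrt t := by
      nlinarith [ht2, hst, hs1, hM.le]
    have hs : Real.sqrt t ≤ 2 * c + M :=
      le_of_mul_le_mul_right h6 (show (0:ℝ) < Real.sqrt t by linarith)
    have h7 : Real.sqrt t ^ 2 ≤ (2 * c + M) ^ 2 :=
      pow_le_pow_left₀ (Real.sqrt_nonneg t) hs 2
    linarith
  have hdecay : ∀ ρ ≥ (1:ℝ),
      a ρ ^ 2 ≤ c * K ^ (A / 2) / β * ρ ^ (-(1:ℝ)/(2 + N)) + M / (2 * β * ρ) := by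
    intro ρ hρ
    have hρ0 : (0:ℝ) < ρ := lt_of_lt_of_le one_pos hρ
    have hbρ : 0 ≤ b ρ := hb ρ hρ
    have hdiv : b ρ / ρ ≤ (K / ρ) ^ ((1:ℝ)/2) := by
      have h2 : (b ρ / ρ) ^ (2:ℕ) ≤ K / ρ := by
        rw [div_pow]
        have h0 := (div_le_iff₀ hρ0).mp (hbound ρ hρ)
        rw [div_le_div_iff₀ (by positivity) hρ0]
        nlinarith
      calc b ρ / ρ = ((b ρ / ρ) ^ (2:ℕ)) ^ ((1:ℝ)/2) := by
            rw [← Real.rpow_natCast (b ρ / ρ) 2, ← Real.rpow_mul (by positivity)]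
            norm_num
        _ ≤ (K / ρ) ^ ((1:ℝ)/2) :=
            Real.rpow_le_rpow (by positivity) h2 (by norm_num)
    have hrpow : (b ρ / ρ) ^ A ≤ K ^ (A/2) * ρ ^ (-(1:ℝ)/(2 + N)) := by
      have h1 : (b ρ / ρ) ^ A ≤ ((K / ρ) ^ ((1:ℝ)/2)) ^ A :=
        Real.rpow_le_rpow (by positivity) hdiv hA0.le
      have h2 : ((K / ρ) ^ ((1:ℝ)/2)) ^ A = K ^ (A/2) * ρ ^ (-(1:ℝ)/(2 + N)) := by
        rw [← Real.rpow_mul (by positivity), Real.div_rpow hK0.le hρ0.le,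
          div_eq_mul_inv, ← Real.rpow_neg hρ0.le]
        congr 2
        · ring
        · rw [hA]; field_simp
      rw [h2] at h1; exact h1
    have hkey := hineq ρ hρ
    have hbb : 0 ≤ (1 / (2 * ρ)) * b ρ ^ 2 := by positivity
    have h4 : β * a ρ ^ 2 ≤ c * (K ^ (A/2) * ρ ^ (-(1:ℝ)/(2 + N))) + M / (2 * ρ) := by
      linarith [mul_le_mul_of_nonneg_left hrpow hc.le, hkey, hbb]
    calc a ρ ^ 2 ≤ (c * (K ^ (A/2) * ρ ^ (-(1:ℝ)/(2 + N))) + M / (2 * ρ)) / β := by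
          rw [le_div_iff₀ hβ]; linarith [h4]
      _ = c * K ^ (A/2) / β * ρ ^ (-(1:ℝ)/(2 + N)) + M / (2 * β * ρ) := by
          field_simp
  refine ⟨⟨K, fun ρ hρ => by
      have := hbound ρ hρ
      rw [one_div, inv_mul_eq_div]; exact this⟩,
    ⟨c * K ^ (A / 2) / β, by positivity, hdecay⟩, ?_⟩
  -- Step 3: a → 0
  have h1 : Tendsto (fun ρ : ℝ => ρ ^ (-(1:ℝ)/(2 + N))) atTop (𝓝 0) := by
    rw [show -(1:ℝ)/(2 + (N:ℝ)) = -((1:ℝ)/(2 + N)) by ring]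
    exact tendsto_rpow_neg_atTop (by positivity)
  have h2 : Tendsto (fun ρ : ℝ => M / (2 * β * ρ)) atTop (𝓝 0) := by
    have h3 := tendsto_inv_atTop_zero (𝕜 := ℝ) |>.const_mul (M / (2 * β))
    rw [mul_zero] at h3
    refine h3.congr fun ρ => ?_
    rw [div_eq_mul_inv M (2 * β * ρ), mul_inv, ← mul_assoc, ← div_eq_mul_inv,
      div_eq_mul_inv, div_eq_mul_inv]
  have hlim : Tendsto
      (fun ρ : ℝ => c * K ^ (A / 2) / β * ρ ^ (-(1:ℝ)/(2 + N)) + M / (2 * β * ρ))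
      atTop (𝓝 0) := by
    have h4 := (h1.const_mul (c * K ^ (A / 2) / β)).add h2
    simpa only [mul_zero, add_zero] using h4
  have hsq : Tendsto (fun ρ => a ρ ^ 2) atTop (𝓝 0) :=
    tendsto_of_tendsto_of_tendsto_of_le_of_le' tendsto_const_nhds hlim
      (eventually_atTop.2 ⟨1, fun ρ _ => sq_nonneg _⟩)
      (eventually_atTop.2 ⟨1, fun ρ hρ => hdecay ρ hρ⟩)
  have h5 : Tendsto (fun ρ => Real.sqrt (a ρ ^ 2)) atTop (𝓝 (Real.sqrt 0)) :=
    (Real.continuous_sqrt.tendsto 0).comp hsq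
  rw [Real.sqrt_zero] at h5
  exact h5.congr' (eventually_atTop.2 ⟨1, fun ρ hρ => Real.sqrt_sq (ha ρ hρ)⟩)
end

section
/- Let Ω be a finite measure space, μ_n, μ ∈ 𝓜(Ω̄) (regular Borel measures on a compact metric space Ω̄) with μ_n ≥ 0, μ_n ⇀* μ weakly-*, and y_n, y ∈ C(Ω̄) with ‖y_n - y‖_{C(Ω̄)} → 0. Suppose ⟨μ_n, ψ - y_n⟩₊ → 0 and y ≤ ψ pointwise on Ω̄. Then μ ≥ 0 and ⟨μ, ψ - y⟩ = 0. -/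
open Filter Topology

/-- Passing the complementarity condition to the limit: weak-* convergent
nonnegative functionals `μ_n` on `C(Ω̄)` paired with uniformly convergent `y_n`
yield `μ ≥ 0` and `⟨μ, ψ - y⟩ = 0`. -/
theorem stmt_17 {Ω : Type*} [TopologicalSpace Ω] [CompactSpace Ω] [MetricSpace Ω]
    (μn : ℕ → (C(Ω, ℝ) →L[ℝ] ℝ)) (μ : C(Ω, ℝ) →L[ℝ] ℝ)
    (hpos : ∀ n, ∀ φ : C(Ω, ℝ), (∀ x, 0 ≤ φ x) → 0 ≤ μn n φ)
    (hweak : ∀ φ : C(Ω, ℝ), Tendsto (fun n => μn n φ) atTop (𝓝 (μ φ)))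
    (y : ℕ → C(Ω, ℝ)) (ystar ψ : C(Ω, ℝ))
    (hyconv : Tendsto (fun n => ‖y n - ystar‖) atTop (𝓝 0))
    (hcompl : Tendsto (fun n => max (μn n (ψ - y n)) 0) atTop (𝓝 0))
    (hfeas : ∀ x, ystar x ≤ ψ x) :
    (∀ φ : C(Ω, ℝ), (∀ x, 0 ≤ φ x) → 0 ≤ μ φ) ∧ μ (ψ - ystar) = 0 := by
  have hμpos : ∀ φ : C(Ω, ℝ), (∀ x, 0 ≤ φ x) → 0 ≤ μ φ := fun φ hφ =>
    le_of_tendsto_of_tendsto' tendsto_const_nhds (hweak φ) (fun n => hpos n φ hφ)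
  refine ⟨hμpos, ?_⟩
  -- bound |μn n φ| ≤ ‖φ‖ * μn n 1
  have habs : ∀ n (φ : C(Ω, ℝ)), |μn n φ| ≤ ‖φ‖ * μn n 1 := by
    intro n φ
    have h1 : 0 ≤ μn n ((‖φ‖ : ℝ) • (1 : C(Ω, ℝ)) - φ) := by
      apply hpos
      intro x
      simp only [ContinuousMap.sub_apply, ContinuousMap.smul_apply, ContinuousMap.one_apply,
        smul_eq_mul, mul_one, sub_nonneg]
      exact le_trans (le_abs_self _) (φ.norm_coe_le_norm x)
    have h2 : 0 ≤ μn n ((‖φ‖ : ℝ) • (1 : C(Ω, ℝ)) + φ) := by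
      apply hpos
      intro x
      simp only [ContinuousMap.add_apply, ContinuousMap.smul_apply, ContinuousMap.one_apply,
        smul_eq_mul, mul_one]
      have h := abs_le.mp (φ.norm_coe_le_norm x)
      linarith [h.1]
    rw [map_sub, map_smul] at h1
    rw [map_add, map_smul] at h2
    simp only [smul_eq_mul] at h1 h2
    rw [abs_le]
    constructor <;> linarith
  have herr : Tendsto (fun n => μn n (ystar - y n)) atTop (𝓝 0) := by
    have hbound : ∀ n, ‖μn n (ystar - y n)‖ ≤ ‖y n - ystar‖ * μn n 1 := by
      intro n
      have := habs n (ystar - y n)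
      rwa [show ‖ystar - y n‖ = ‖y n - ystar‖ from norm_sub_rev _ _] at this
    have hrhs : Tendsto (fun n => ‖y n - ystar‖ * μn n 1) atTop (𝓝 0) := by
      have := hyconv.mul (hweak 1)
      simpa using this
    exact squeeze_zero_norm hbound hrhs
  have hmain : Tendsto (fun n => μn n (ψ - y n)) atTop (𝓝 (μ (ψ - ystar))) := by
    have heq : ∀ n, μn n (ψ - y n) = μn n (ψ - ystar) + μn n (ystar - y n) := by
      intro n
      rw [← map_add]
      congr 1
      abel
    simp only [heq]
    simpa using (hweak (ψ - ystar)).add herr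
  have hmax : Tendsto (fun n => max (μn n (ψ - y n)) 0) atTop (𝓝 (max (μ (ψ - ystar)) 0)) :=
    hmain.max tendsto_const_nhds
  have hle : max (μ (ψ - ystar)) 0 = 0 := tendsto_nhds_unique hmax hcompl
  have hle' : μ (ψ - ystar) ≤ 0 := by
    by_contra h
    push_neg at h
    rw [max_eq_left h.le] at hle
    linarith
  have hge : 0 ≤ μ (ψ - ystar) := by
    apply hμpos
    intro x
    simp only [ContinuousMap.sub_apply, sub_nonneg]
    exact hfeas x
  linarith
end
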